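/- Let p be a prime with p ≡ 1 (mod 4), q = p^k, and N = ord_2(q−1) + 1. Let α ∈ F_q* have exact order 2^{N−1}, let c be the diagonal matrix diag(α, α^{-1}) and h = [[0,1],[−1,0]] in SL_2(F_q). Then S = ⟨c, h⟩ is a Sylow 2-subgroup of SL_2(F_q) and is isomorphic to the generalized quaternion group Q_{2^N}. -/
import Mathlib

open Matrix

private def qmap {G : Type} [Group G] (c h : G) {n : ℕ} : QuaternionGroup n → G
  | .a i => c ^ i.val
  | .xa i => h * c ^ i.val

private lemma qmap_mul {G : Type} [Group G] (c h : G) {n : ℕ} (hn : 0 < n)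
    (horder : orderOf c = 2 * n) (hh2 : h * h = c ^ n) (hch : c * h = h * c⁻¹)
    (x y : QuaternionGroup n) : qmap c h (x * y) = qmap c h x * qmap c h y := by
  haveI : NeZero (2 * n) := ⟨by positivity⟩
  have K1 : ∀ i j : ZMod (2 * n), c ^ i.val * c ^ j.val = c ^ (i + j).val := by
    intro i j
    calc c ^ i.val * c ^ j.val = c ^ (i.val + j.val) := (pow_add c _ _).symm
      _ = c ^ ((i.val + j.val) % orderOf c) := (pow_mod_orderOf c _).symm
      _ = c ^ (i + j).val := by rw [horder, ZMod.val_add]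
  have key : ∀ m : ℕ, c ^ m * h = h * (c ^ m)⁻¹ := by
    intro m
    induction m with
    | zero => simp
    | succ m ih =>
      rw [pow_succ, mul_assoc, hch, ← mul_assoc, ih, _root_.mul_inv_rev, mul_assoc]
      congr 1
      exact (((Commute.refl c).pow_left m).inv_inv).eq
  have K2 : ∀ i j : ZMod (2 * n), (c ^ i.val)⁻¹ * c ^ j.val = c ^ (j - i).val := by
    intro i j
    rw [inv_mul_eq_iff_eq_mul, K1 i (j - i)]
    have : i + (j - i) = j := by ring
    rw [this]
  have K3 : c ^ n = c ^ ((n : ZMod (2 * n))).val := by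
    congr 1
    rw [ZMod.val_natCast, Nat.mod_eq_of_lt (by omega)]
  rcases x with i | i <;> rcases y with j | j
  · show qmap c h (.a (i + j)) = _
    exact (K1 i j).symm
  · show qmap c h (.xa (j - i)) = c ^ i.val * (h * c ^ j.val)
    show h * c ^ (j - i).val = _
    rw [← mul_assoc, key, mul_assoc, K2]
  · show qmap c h (.xa (i + j)) = h * c ^ i.val * c ^ j.val
    show h * c ^ (i + j).val = _
    rw [mul_assoc, K1]
  · show qmap c h (.a ((n : ZMod (2*n)) + j - i)) = (h * c ^ i.val) * (h * c ^ j.val)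
    show c ^ ((n : ZMod (2*n)) + j - i).val = _
    have e : (h * c ^ i.val) * (h * c ^ j.val) = (h * h) * ((c ^ i.val)⁻¹ * c ^ j.val) := by
      calc (h * c ^ i.val) * (h * c ^ j.val) = h * (c ^ i.val * h) * c ^ j.val := by group
        _ = h * (h * (c ^ i.val)⁻¹) * c ^ j.val := by rw [key]
        _ = (h * h) * ((c ^ i.val)⁻¹ * c ^ j.val) := by group
    rw [e, hh2, K2, K3, K1]
    have : (n : ZMod (2*n)) + j - i = (n : ZMod (2*n)) + (j - i) := by ring
    rw [this]

private lemma det_surj' (F : Type) [Field F] [Fintype F] :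
    Function.Surjective (Matrix.GeneralLinearGroup.det : GL (Fin 2) F →* Fˣ) := by
  intro u
  refine ⟨⟨Matrix.diagonal ![u.val, 1], Matrix.diagonal ![(u⁻¹).val, 1], ?_, ?_⟩, ?_⟩
  · rw [Matrix.diagonal_mul_diagonal]
    have : (![u.val, 1] * ![(u⁻¹).val, 1] : Fin 2 → F) = 1 := by
      funext i; fin_cases i <;> simp
    rw [show (fun i => ![u.val,1] i * ![(u⁻¹).val,1] i) = (![u.val, 1] * ![(u⁻¹).val, 1] : Fin 2 → F) from rfl, this]
    exact Matrix.diagonal_one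
  · rw [Matrix.diagonal_mul_diagonal]
    have : (![(u⁻¹).val, 1] * ![u.val, 1] : Fin 2 → F) = 1 := by
      funext i; fin_cases i <;> simp
    rw [show (fun i => ![(u⁻¹).val,1] i * ![u.val,1] i) = (![(u⁻¹).val, 1] * ![u.val, 1] : Fin 2 → F) from rfl, this]
    exact Matrix.diagonal_one
  · ext
    rw [Matrix.GeneralLinearGroup.val_det_apply]
    show Matrix.det (Matrix.diagonal ![u.val, 1]) = u
    rw [Matrix.det_diagonal, Fin.prod_univ_two]
    simp

private lemma card_SL2' (F : Type) [Field F] [Fintype F] :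
    Nat.card (Matrix.SpecialLinearGroup (Fin 2) F) * (Fintype.card F - 1)
      = (Fintype.card F ^ 2 - 1) * (Fintype.card F ^ 2 - Fintype.card F) := by
  have h1 := Matrix.card_GL_field (𝔽 := F) 2
  rw [Fin.prod_univ_two] at h1
  have h2 := Subgroup.card_eq_card_quotient_mul_card_subgroup
    (Matrix.GeneralLinearGroup.det : GL (Fin 2) F →* Fˣ).ker
  have h3 : Nat.card (GL (Fin 2) F ⧸ (Matrix.GeneralLinearGroup.det : GL (Fin 2) F →* Fˣ).ker)
      = Fintype.card F - 1 := by
    rw [Nat.card_congr (QuotientGroup.quotientKerEquivOfSurjective _ (det_surj' F)).toEquiv]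
    rw [Nat.card_units, Nat.card_eq_fintype_card]
  have h4 : Nat.card (Matrix.SpecialLinearGroup (Fin 2) F)
      = Nat.card (Matrix.GeneralLinearGroup.det : GL (Fin 2) F →* Fˣ).ker := by
    refine Nat.card_congr ⟨fun g => ⟨Matrix.SpecialLinearGroup.toGL g, ?_⟩,
      fun x => ⟨(x.1 : Matrix (Fin 2) (Fin 2) F), ?_⟩, fun g => ?_, fun x => ?_⟩
    · exact Matrix.SpecialLinearGroup.coeToGL_det g
    · have hx := x.2
      rw [MonoidHom.mem_ker] at hx
      have hx' : (Matrix.GeneralLinearGroup.det x.1).val = (1 : Fˣ).val := by rw [hx]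
      rwa [Matrix.GeneralLinearGroup.val_det_apply] at hx'
    · ext; rfl
    · ext : 2; rfl
  rw [h3, ← h4] at h2
  rw [h2] at h1
  rw [mul_comm] at h1
  rw [h1]
  norm_num

/-- Let `p ≡ 1 (mod 4)` be prime, `q = p^k`, and `N = ord₂(q−1) + 1`.  If `α ∈ F_q^×` has
exact order `2^(N−1)`, `c = diag(α, α⁻¹)` and `h = [[0,1],[−1,0]]` in `SL₂(F_q)`, then
`S = ⟨c, h⟩` is a Sylow 2-subgroup of `SL₂(F_q)` and is isomorphic to the generalized
quaternion group `Q_{2^N}` (i.e. the dicyclic group of order `4·2^(N−2)`). -/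
theorem sylow_two_SL2_quaternion
    (p k N : ℕ) (hp : p.Prime) (hp4 : p % 4 = 1) (hk : 0 < k)
    (F : Type) [Field F] [Fintype F] (hq : Fintype.card F = p ^ k)
    (hN : N = (Fintype.card F - 1).factorization 2 + 1)
    (α : Fˣ) (hα : orderOf α = 2 ^ (N - 1))
    (c h : Matrix.SpecialLinearGroup (Fin 2) F)
    (hc : (c : Matrix (Fin 2) (Fin 2) F) = !![(α : F), 0; 0, ((α⁻¹ : Fˣ) : F)])
    (hh : (h : Matrix (Fin 2) (Fin 2) F) = !![0, 1; -1, 0]) :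
    (∃ S : Sylow 2 (Matrix.SpecialLinearGroup (Fin 2) F),
        (S : Subgroup _) = Subgroup.closure {c, h}) ∧
      Nonempty (↥(Subgroup.closure {c, h}) ≃* QuaternionGroup (2 ^ (N - 2))) := by
  haveI : Fact (Nat.Prime 2) := ⟨Nat.prime_two⟩
  have hq2 : 2 ≤ Fintype.card F := Fintype.one_lt_card
  have hq4 : Fintype.card F % 4 = 1 := by
    rw [hq, Nat.pow_mod, hp4, one_pow, Nat.one_mod_eq_one.mpr (by norm_num)]
  have hq5 : 5 ≤ Fintype.card F := by omega
  have hfact2 : 2 ≤ (Fintype.card F - 1).factorization 2 := by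
    rw [← Nat.Prime.pow_dvd_iff_le_factorization Nat.prime_two (by omega)]
    norm_num
    omega
  have hN3 : 3 ≤ N := by omega
  -- powers of c
  have hpow : ∀ m : ℕ, ((c ^ m : Matrix.SpecialLinearGroup (Fin 2) F) : Matrix (Fin 2) (Fin 2) F)
      = !![(α : F) ^ m, 0; 0, ((α⁻¹ : Fˣ) : F) ^ m] := by
    intro m
    induction m with
    | zero => rw [pow_zero, Matrix.SpecialLinearGroup.coe_one]; simp [Matrix.one_fin_two]
    | succ m ih =>
      rw [pow_succ, Matrix.SpecialLinearGroup.coe_mul, ih, hc, Matrix.mul_fin_two]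
      ext i j
      fin_cases i <;> fin_cases j <;> simp [pow_succ]
  have hαpow : ∀ m : ℕ, (α : F) ^ m = ((α ^ m : Fˣ) : F) := fun m =>
    (Units.val_pow_eq_pow_val α m).symm
  have hordα : α ^ (2 ^ (N - 1)) = 1 := by rw [← hα]; exact pow_orderOf_eq_one α
  have hcO : c ^ (2 ^ (N - 1)) = 1 := by
    apply Subtype.ext
    rw [hpow, Matrix.SpecialLinearGroup.coe_one]
    have e1 : (α : F) ^ (2 ^ (N - 1)) = 1 := by rw [hαpow, hordα]; rfl
    have e2 : ((α⁻¹ : Fˣ) : F) ^ (2 ^ (N - 1)) = 1 := by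
      rw [Units.val_inv_eq_inv_val, inv_pow, e1, inv_one]
    rw [e1, e2, Matrix.one_fin_two]
  have hx1 : (α : F) ^ (2 ^ (N - 2)) ≠ 1 := by
    intro hone
    have : α ^ (2 ^ (N - 2)) = 1 := Units.ext (by rw [← hαpow]; exact hone)
    have hdvd : orderOf α ∣ 2 ^ (N - 2) := orderOf_dvd_of_pow_eq_one this
    rw [hα] at hdvd
    have := Nat.le_of_dvd (by positivity) hdvd
    have := Nat.pow_lt_pow_right (a := 2) one_lt_two (show N - 2 < N - 1 by omega)
    omega
  have hcne : c ^ (2 ^ (N - 2)) ≠ 1 := by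
    intro hone
    apply hx1
    have := congrArg (fun g : Matrix.SpecialLinearGroup (Fin 2) F =>
      (g : Matrix (Fin 2) (Fin 2) F)) hone
    simp only [hpow, Matrix.SpecialLinearGroup.coe_one, Matrix.one_fin_two] at this
    have := congrFun (congrFun this 0) 0
    simpa using this
  have horder : orderOf c = 2 ^ (N - 1) := by
    have h1 : c ^ 2 ^ (N - 2 + 1) = 1 := by
      rw [show N - 2 + 1 = N - 1 by omega]; exact hcO
    have := orderOf_eq_prime_pow (x := c) (p := 2) (n := N - 2) hcne h1
    rw [this]
    congr 1
    omega
  -- the value -1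
  have hx : (α : F) ^ (2 ^ (N - 2)) = -1 := by
    have hx2 : ((α : F) ^ (2 ^ (N - 2))) ^ 2 = 1 := by
      rw [← pow_mul, show 2 ^ (N - 2) * 2 = 2 ^ (N - 1) by
        rw [show N - 1 = N - 2 + 1 by omega, pow_succ]]
      rw [hαpow, hordα]; rfl
    have hfac : ((α : F) ^ (2 ^ (N - 2)) - 1) * ((α : F) ^ (2 ^ (N - 2)) + 1) = 0 := by
      linear_combination hx2
    rcases mul_eq_zero.mp hfac with h0 | h0
    · exact absurd (sub_eq_zero.mp h0) hx1
    · exact eq_neg_of_add_eq_zero_left h0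
  have hxinv : ((α⁻¹ : Fˣ) : F) ^ (2 ^ (N - 2)) = -1 := by
    rw [Units.val_inv_eq_inv_val, inv_pow, hx, inv_neg, inv_one]
  -- relations
  have hh2 : h * h = c ^ (2 ^ (N - 2)) := by
    apply Subtype.ext
    rw [Matrix.SpecialLinearGroup.coe_mul, hh, hpow, hx, hxinv, Matrix.mul_fin_two]
    norm_num
  have hmulinv : (α : F) * ((α⁻¹ : Fˣ) : F) = 1 := by
    rw [← Units.val_mul, mul_inv_cancel, Units.val_one]
  have hmulinv' : ((α⁻¹ : Fˣ) : F) * (α : F) = 1 := by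
    rw [← Units.val_mul, inv_mul_cancel, Units.val_one]
  have hchc : c * h * c = h := by
    apply Subtype.ext
    rw [Matrix.SpecialLinearGroup.coe_mul, Matrix.SpecialLinearGroup.coe_mul, hc, hh,
      Matrix.mul_fin_two, Matrix.mul_fin_two]
    ext i j
    fin_cases i <;> fin_cases j <;>
      simp [hmulinv, hmulinv']
  have hch : c * h = h * c⁻¹ := by
    calc c * h = (c * h * c) * c⁻¹ := by group
      _ = h * c⁻¹ := by rw [hchc]
  -- set up n
  set n : ℕ := 2 ^ (N - 2) with hndef
  have hn : 0 < n := by positivity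
  have h2n : 2 * n = 2 ^ (N - 1) := by
    rw [hndef, show N - 1 = N - 2 + 1 by omega, pow_succ]; ring
  haveI : NeZero n := ⟨by omega⟩
  haveI : NeZero (2 * n) := ⟨by omega⟩
  have horder' : orderOf c = 2 * n := by rw [horder, h2n]
  -- the homomorphism
  let φ : QuaternionGroup n →* Matrix.SpecialLinearGroup (Fin 2) F :=
    MonoidHom.mk' (qmap c h) (qmap_mul c h hn horder' hh2 hch)
  have hφa : ∀ i : ZMod (2 * n), φ (.a i) = c ^ i.val := fun _ => rfl
  have hφxa : ∀ i : ZMod (2 * n), φ (.xa i) = h * c ^ i.val := fun _ => rfl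
  haveI : Fact (1 < 2 * n) := ⟨by omega⟩
  have hrange : φ.range = Subgroup.closure {c, h} := by
    apply le_antisymm
    · rintro _ ⟨x, rfl⟩
      have hcmem : c ∈ Subgroup.closure ({c, h} : Set (Matrix.SpecialLinearGroup (Fin 2) F)) :=
        Subgroup.subset_closure (by simp)
      have hhmem : h ∈ Subgroup.closure ({c, h} : Set (Matrix.SpecialLinearGroup (Fin 2) F)) :=
        Subgroup.subset_closure (by simp)
      rcases x with i | i
      · rw [hφa]; exact Subgroup.pow_mem _ hcmem _
      · rw [hφxa]; exact Subgroup.mul_mem _ hhmem (Subgroup.pow_mem _ hcmem _)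
    · rw [Subgroup.closure_le]
      rintro x hx
      rcases hx with rfl | hx
      · exact ⟨.a 1, by rw [hφa, ZMod.val_one, pow_one]⟩
      · rcases Set.mem_singleton_iff.mp hx with rfl
        exact ⟨.xa 0, by rw [hφxa, ZMod.val_zero, pow_zero, mul_one]⟩
  have hinj : Function.Injective φ := by
    rw [injective_iff_map_eq_one]
    rintro (i | i) hone
    · rw [hφa] at hone
      have hdvd : orderOf c ∣ i.val := orderOf_dvd_of_pow_eq_one hone
      rw [horder'] at hdvd
      have hz : i = 0 := by
        have : i.val = 0 := Nat.eq_zero_of_dvd_of_lt hdvd (ZMod.val_lt i)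
        exact (ZMod.val_eq_zero i).mp this
      rw [hz, QuaternionGroup.one_def]
    · exfalso
      rw [hφxa] at hone
      have := congrArg (fun g : Matrix.SpecialLinearGroup (Fin 2) F =>
        (g : Matrix (Fin 2) (Fin 2) F)) hone
      simp only [Matrix.SpecialLinearGroup.coe_mul, hh, hpow,
        Matrix.SpecialLinearGroup.coe_one, Matrix.mul_fin_two, Matrix.one_fin_two] at this
      have := congrFun (congrFun this 0) 0
      simp at this
  have ecl : ↥(Subgroup.closure ({c, h} : Set (Matrix.SpecialLinearGroup (Fin 2) F)))
      ≃* QuaternionGroup n :=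
    (MulEquiv.subgroupCongr hrange.symm).trans (MonoidHom.ofInjective hinj).symm
  have hcard : Nat.card ↥(Subgroup.closure ({c, h} : Set (Matrix.SpecialLinearGroup (Fin 2) F)))
      = 2 ^ N := by
    have hNe : (2:ℕ) ^ N = 4 * 2 ^ (N - 2) := by
      have hN2 : N = (N - 2) + 2 := by omega
      conv_lhs => rw [hN2]
      rw [pow_add]
      ring
    rw [Nat.card_congr ecl.toEquiv, Nat.card_eq_fintype_card, QuaternionGroup.card, hndef, hNe]
  obtain ⟨m, hm⟩ : ∃ m, Fintype.card F = m + 1 := ⟨Fintype.card F - 1, by omega⟩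
  have hSL := card_SL2' F
  rw [hm] at hSL
  have e1 : (m + 1) ^ 2 - 1 = m * (m + 2) := by
    have : (m + 1) ^ 2 = m * (m + 2) + 1 := by ring
    rw [this, Nat.add_sub_cancel]
  have e2 : (m + 1) ^ 2 - (m + 1) = (m + 1) * m := by
    have : (m + 1) ^ 2 = (m + 1) * m + (m + 1) := by ring
    rw [this, Nat.add_sub_cancel]
  have e3 : m + 1 - 1 = m := by omega
  rw [e1, e2, e3] at hSL
  have hm4 : 4 ≤ m := by omega
  have hScard : Nat.card (Matrix.SpecialLinearGroup (Fin 2) F) = (m * (m + 2)) * (m + 1) := by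
    apply Nat.eq_of_mul_eq_mul_right (show 0 < m by omega)
    rw [hSL]; ring
  have hvm : m.factorization 2 = N - 1 := by
    have hcm : Fintype.card F - 1 = m := by omega
    rw [hcm] at hN
    omega
  have hvq : (m + 1).factorization 2 = 0 :=
    Nat.factorization_eq_zero_of_not_dvd (by omega)
  have hvB : (m + 2).factorization 2 = 1 := by
    have hdvd : 2 ∣ m + 2 := by omega
    have hndvd : ¬ 4 ∣ m + 2 := by omega
    have hle : (m + 2).factorization 2 ≤ 1 := by
      by_contra hgt
      have h2 : 2 ≤ (m + 2).factorization 2 := by omega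
      have := (Nat.Prime.pow_dvd_iff_le_factorization Nat.prime_two (by omega)).mpr h2
      norm_num at this
      exact hndvd this
    have hge : 1 ≤ (m + 2).factorization 2 := by
      rw [← Nat.Prime.pow_dvd_iff_le_factorization Nat.prime_two (by omega)]
      simpa using hdvd
    omega
  have hvS : (Nat.card (Matrix.SpecialLinearGroup (Fin 2) F)).factorization 2 = N := by
    rw [hScard,
      Nat.factorization_mul (Nat.mul_ne_zero (by omega) (by omega)) (by omega),
      Nat.factorization_mul (by omega) (by omega)]
    simp only [Finsupp.coe_add, Pi.add_apply]
    rw [hvm, hvq, hvB]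
    omega
  have hcardeq : Nat.card ↥(Subgroup.closure ({c, h} : Set (Matrix.SpecialLinearGroup (Fin 2) F)))
      = 2 ^ (Nat.card (Matrix.SpecialLinearGroup (Fin 2) F)).factorization 2 := by
    rw [hvS]; exact hcard
  exact ⟨⟨Sylow.ofCard _ hcardeq, Sylow.coe_ofCard _ _⟩, ⟨ecl⟩⟩
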